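/- arXiv:2203.00207 — 2 statements merged into one kernel-verified Lean document; each statement's English description precedes it below -/
import Mathlib

section
/- Let K be a field of characteristic 0, r, n, m ≥ 1 integers, u ≥ 0, and ζ₁,…,ζ_r ∈ K none of which is a non-positive rational integer; set γ₁ = ζ_r, …, γ_r = ζ₁. Regard α₁,…,α_m as indeterminates and consider the polynomial ring K[α₁,…,α_m][t_{i,s} : 1 ≤ i ≤ m, 0 ≤ s ≤ r−1]. Let C_{u,m} = Ψ(P̂_u) ∈ K[α₁,…,α_m], where Ψ and P̂_u are as in the context. Then C_{u,m} is homogeneous in α₁,…,α_m of degree m·[r(u+1) + r²n + C(r,2)] + C(m,2)·(2n+1)r², and is divisible by ∏_{i=1}^m α_i^{r(u+1) + r²n + C(r,2)} (where C(a,2) = a(a−1)/2). -/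
open MvPolynomial Finset

/-- The polynomial `P̂_u` in the variables `α₁,…,α_m` (encoded `Sum.inl i`) and
`t_{i,s}` (encoded `Sum.inr (i,s)`, `1 ≤ i ≤ m`, `0 ≤ s ≤ r−1`):
`P̂_u = ∏_{i,s} [t_{i,s}^u ∏_j (t_{i,s}−α_j)^{rn}] · ∏_{(i₁,s₁)<(i₂,s₂)} (t_{i₂,s₂}−t_{i₁,s₁})`,
the last product being over pairs in lexicographic order. -/
noncomputable def PhatP (K : Type*) [Field K] (r n m u : ℕ) :
    MvPolynomial (Fin m ⊕ Fin m × Fin r) K :=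
  (∏ i : Fin m, ∏ s : Fin r,
      (MvPolynomial.X (Sum.inr (i, s)) ^ u *
        ∏ j : Fin m,
          (MvPolynomial.X (Sum.inr (i, s)) - MvPolynomial.X (Sum.inl j)) ^ (r * n))) *
  ∏ p : Fin m × Fin r, ∏ q ∈ Finset.univ.filter
      (fun q : Fin m × Fin r => p.1 < q.1 ∨ p.1 = q.1 ∧ p.2 < q.2),
    (MvPolynomial.X (Sum.inr q) - MvPolynomial.X (Sum.inr p))

namespace Statement11Aux

variable {K : Type*} [Field K]

section LB

variable {σ : Type*} (w : σ → ℕ)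

/-- Every exponent in the support has `w`-weight at least `k`. -/
def LBd (k : ℕ) (p : MvPolynomial σ K) : Prop :=
  ∀ e ∈ p.support, k ≤ Finsupp.weight w e

theorem LBd.mono {k k' : ℕ} {p : MvPolynomial σ K} (h : LBd w k p) (hk : k' ≤ k) :
    LBd w k' p := fun e he => le_trans hk (h e he)

theorem LBd.zero_lb (p : MvPolynomial σ K) : LBd w 0 p := fun _ _ => Nat.zero_le _

theorem LBd.mul {k l : ℕ} {p q : MvPolynomial σ K} (hp : LBd w k p) (hq : LBd w l q) :
    LBd w (k + l) (p * q) := by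
  classical
  intro e he
  obtain ⟨a, ha, b, hb, rfl⟩ := Finset.mem_add.mp (MvPolynomial.support_mul p q he)
  rw [map_add]
  exact add_le_add (hp a ha) (hq b hb)

theorem LBd.prod {ι : Type*} (t : Finset ι) (f : ι → MvPolynomial σ K) (k : ι → ℕ)
    (h : ∀ x ∈ t, LBd w (k x) (f x)) :
    LBd w (∑ x ∈ t, k x) (∏ x ∈ t, f x) := by
  classical
  revert h
  induction t using Finset.cons_induction with
  | empty => intro _; simpa using LBd.zero_lb w (1 : MvPolynomial σ K)
  | cons a t hat ih =>
    intro h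
    rw [Finset.prod_cons, Finset.sum_cons]
    exact LBd.mul w (h a (Finset.mem_cons_self a t))
      (ih fun x hx => h x (Finset.mem_cons_of_mem hx))

theorem LBd.pow {k : ℕ} {p : MvPolynomial σ K} (hp : LBd w k p) (c : ℕ) :
    LBd w (c * k) (p ^ c) := by
  induction c with
  | zero => simpa using LBd.zero_lb w (1 : MvPolynomial σ K)
  | succ c ih =>
    rw [pow_succ, Nat.succ_mul]
    exact LBd.mul w ih hp

lemma weight_single (v : σ) (c : ℕ) :
    Finsupp.weight w (Finsupp.single v c) = c * w v := by
  rw [Finsupp.weight_apply, Finsupp.sum_single_index] <;> simp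

theorem LBd.X (v : σ) : LBd w (w v) (MvPolynomial.X (R := K) v) := by
  intro e he
  rw [MvPolynomial.support_X] at he
  rw [Finset.mem_singleton] at he
  subst he
  simp [weight_single]

theorem LBd.subX (a b : σ) :
    LBd w (min (w a) (w b)) (MvPolynomial.X (R := K) a - MvPolynomial.X b) := by
  classical
  intro e he
  have := MvPolynomial.support_sub σ (MvPolynomial.X (R := K) a) (MvPolynomial.X b) he
  rw [MvPolynomial.support_X, MvPolynomial.support_X, Finset.mem_union,
    Finset.mem_singleton, Finset.mem_singleton] at this
  rcases this with h | h <;> subst h <;> simp [weight_single]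

end LB

lemma weight_eq_sum {σ : Type*} [Fintype σ] (w : σ → ℕ) (e : σ →₀ ℕ) :
    Finsupp.weight w e = ∑ v, e v * w v := by
  rw [Finsupp.weight_apply, Finsupp.sum]
  simp only [smul_eq_mul]
  exact Finset.sum_subset (Finset.subset_univ _)
    (fun v _ hv => by rw [Finsupp.notMem_support_iff.mp hv, zero_mul])

lemma degree_eq_sum {σ : Type*} [Fintype σ] (e : σ →₀ ℕ) :
    e.degree = ∑ v, e v :=
  Finset.sum_subset (Finset.subset_univ _)
    (fun v _ hv => Finsupp.notMem_support_iff.mp hv)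

/-- weight function selecting the variables with first index `i` -/
def wt (m r : ℕ) (i : Fin m) : (Fin m ⊕ Fin m × Fin r) → ℕ :=
  Sum.elim (fun j => if j = i then 1 else 0) (fun q => if q.1 = i then 1 else 0)

lemma weight_wt (m r : ℕ) (i : Fin m) (e : (Fin m ⊕ Fin m × Fin r) →₀ ℕ) :
    Finsupp.weight (wt m r i) e
      = e (Sum.inl i) + ∑ s : Fin r, e (Sum.inr (i, s)) := by
  rw [weight_eq_sum, Fintype.sum_sum_type, Fintype.sum_prod_type]
  congr 1
  · simp [wt]
  · have h : ∀ j : Fin m,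
        (∑ s : Fin r, e (Sum.inr (j, s)) * wt m r i (Sum.inr (j, s)))
          = if j = i then ∑ s : Fin r, e (Sum.inr (j, s)) else 0 := by
      intro j; by_cases hj : j = i <;> simp [wt, hj]
    rw [Finset.sum_congr rfl fun j _ => h j]
    simp




lemma sum_fin_reflect (r : ℕ) : ∑ s : Fin r, (r - 1 - (s : ℕ)) = r * (r - 1) / 2 := by
  rw [Fin.sum_univ_eq_sum_range (fun k => r - 1 - k) r]
  rw [Finset.sum_range_reflect (fun j => j) r]
  exact Finset.sum_range_id r

lemma filter_inter_eq (m r : ℕ) (i : Fin m) (s : Fin r) :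
    (Finset.univ.filter fun q : Fin m × Fin r =>
        (i < q.1 ∨ i = q.1 ∧ s < q.2) ∧ q.1 = i)
      = {i} ×ˢ Finset.Ioi s := by
  ext ⟨a, b⟩
  simp only [Finset.mem_filter, Finset.mem_univ, true_and, Finset.mem_product,
    Finset.mem_singleton, Finset.mem_Ioi]
  constructor
  · rintro ⟨h, rfl⟩
    rcases h with h | ⟨_, hs⟩
    · exact absurd h (lt_irrefl _)
    · exact ⟨rfl, hs⟩
  · rintro ⟨rfl, hs⟩
    exact ⟨Or.inr ⟨rfl, hs⟩, rfl⟩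

lemma count1 (m r : ℕ) (i : Fin m) :
    (∑ p : Fin m × Fin r, ∑ q ∈ Finset.univ.filter
        (fun q : Fin m × Fin r => p.1 < q.1 ∨ p.1 = q.1 ∧ p.2 < q.2),
      (if p.1 = i ∧ q.1 = i then 1 else 0)) = r * (r - 1) / 2 := by
  classical
  rw [Fintype.sum_prod_type]
  have h : ∀ (i' : Fin m) (s : Fin r),
      (∑ q ∈ Finset.univ.filter
          (fun q : Fin m × Fin r => i' < q.1 ∨ i' = q.1 ∧ s < q.2),
        (if i' = i ∧ q.1 = i then 1 else 0))
        = if i' = i then r - 1 - (s : ℕ) else 0 := by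
    intro i' s
    by_cases hi : i' = i
    · subst hi
      simp only [true_and, if_pos rfl]
      rw [← Finset.sum_filter, Finset.filter_filter]
      have := filter_inter_eq m r i' s
      rw [Finset.filter_congr (fun q _ => Iff.rfl), this]
      simp [Fin.card_Ioi, Finset.card_product]
    · simp [hi]
  rw [Finset.sum_congr rfl fun i' _ => Finset.sum_congr rfl fun s _ => h i' s]
  simp [sum_fin_reflect]





lemma sum_fin_reflect' (m : ℕ) : ∑ i : Fin m, (m - 1 - (i : ℕ)) = m * (m - 1) / 2 :=
  sum_fin_reflect m

lemma filter_lex_eq (m r : ℕ) (i : Fin m) (s : Fin r) :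
    (Finset.univ.filter fun q : Fin m × Fin r => i < q.1 ∨ i = q.1 ∧ s < q.2)
      = (Finset.Ioi i ×ˢ Finset.univ) ∪ ({i} ×ˢ Finset.Ioi s) := by
  ext ⟨a, b⟩
  simp only [Finset.mem_filter, Finset.mem_univ, true_and, Finset.mem_union,
    Finset.mem_product, Finset.mem_singleton, Finset.mem_Ioi, and_true]
  constructor
  · rintro (h | ⟨rfl, hs⟩)
    · exact Or.inl h
    · exact Or.inr ⟨rfl, hs⟩
  · rintro (h | ⟨rfl, hs⟩)
    · exact Or.inl h
    · exact Or.inr ⟨rfl, hs⟩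

lemma card_filter_lex (m r : ℕ) (i : Fin m) (s : Fin r) :
    (Finset.univ.filter fun q : Fin m × Fin r =>
        i < q.1 ∨ i = q.1 ∧ s < q.2).card
      = (m - 1 - (i : ℕ)) * r + (r - 1 - (s : ℕ)) := by
  classical
  rw [filter_lex_eq]
  rw [Finset.card_union_of_disjoint]
  · simp [Finset.card_product, Fin.card_Ioi]
  · rw [Finset.disjoint_left]
    rintro ⟨a, b⟩ ha hb
    simp only [Finset.mem_product, Finset.mem_Ioi, Finset.mem_singleton] at ha hb
    exact absurd (hb.1 ▸ ha.1) (lt_irrefl _)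

lemma count2 (m r : ℕ) :
    (∑ p : Fin m × Fin r, (Finset.univ.filter
        (fun q : Fin m × Fin r => p.1 < q.1 ∨ p.1 = q.1 ∧ p.2 < q.2)).card)
      = r * (r * (m * (m - 1) / 2)) + m * (r * (r - 1) / 2) := by
  classical
  rw [Fintype.sum_prod_type]
  rw [Finset.sum_congr rfl fun i _ => Finset.sum_congr rfl fun s _ => card_filter_lex m r i s]
  simp only [Finset.sum_add_distrib, Finset.sum_const, Finset.card_univ, Fintype.card_fin,
    smul_eq_mul]
  rw [sum_fin_reflect]
  congr 1
  have : ∀ x : Fin m, r * ((m - 1 - (x : ℕ)) * r) = (m - 1 - (x : ℕ)) * (r * r) := by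
    intro x; ring
  rw [Finset.sum_congr rfl fun x _ => this x, ← Finset.sum_mul, sum_fin_reflect']
  ring


lemma wt_inl (m r : ℕ) (i j : Fin m) :
    wt m r i (Sum.inl j) = if j = i then 1 else 0 := rfl

lemma wt_inr (m r : ℕ) (i : Fin m) (q : Fin m × Fin r) :
    wt m r i (Sum.inr q) = if q.1 = i then 1 else 0 := rfl

lemma lb_factor (r n m u : ℕ) (i i' : Fin m) (s : Fin r) :
    LBd (wt m r i) (if i' = i then u + r * n else 0)
      (MvPolynomial.X (R := K) (Sum.inr (i', s)) ^ u *
        ∏ j : Fin m,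
          (MvPolynomial.X (Sum.inr (i', s)) - MvPolynomial.X (Sum.inl j)) ^ (r * n)) := by
  classical
  have hX : LBd (wt m r i) (u * wt m r i (Sum.inr (i', s)))
      (MvPolynomial.X (R := K) (Sum.inr (i', s)) ^ u) :=
    (LBd.X (wt m r i) (Sum.inr (i', s))).pow (wt m r i) u
  have hj : ∀ j : Fin m, LBd (wt m r i)
      ((r * n) * min (wt m r i (Sum.inr (i', s))) (wt m r i (Sum.inl j)))
      ((MvPolynomial.X (R := K) (Sum.inr (i', s)) - MvPolynomial.X (Sum.inl j)) ^ (r * n)) :=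
    fun j => (LBd.subX (wt m r i) (Sum.inr (i', s)) (Sum.inl j)).pow (wt m r i) (r * n)
  have hprod := LBd.prod (wt m r i) Finset.univ _ _ (fun j _ => hj j)
  have htot := LBd.mul (wt m r i) hX hprod
  refine htot.mono (wt m r i) (le_of_eq ?_)
  simp only [wt_inr, wt_inl]
  by_cases h : i' = i
  · simp only [h, if_pos rfl] at *
    rw [Finset.sum_eq_single i]
    · simp
    · intro b _ hb; simp [hb]
    · simp
  · simp [h]

lemma lb_pairs (r n m u : ℕ) (i : Fin m) :
    LBd (wt m r i) (r * (r - 1) / 2)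
      (∏ p : Fin m × Fin r, ∏ q ∈ Finset.univ.filter
          (fun q : Fin m × Fin r => p.1 < q.1 ∨ p.1 = q.1 ∧ p.2 < q.2),
        (MvPolynomial.X (R := K) (Sum.inr q) - MvPolynomial.X (Sum.inr p))) := by
  classical
  have hpq : ∀ (p q : Fin m × Fin r), LBd (wt m r i)
      (if p.1 = i ∧ q.1 = i then 1 else 0)
      (MvPolynomial.X (R := K) (Sum.inr q) - MvPolynomial.X (Sum.inr p)) := by
    intro p q
    refine (LBd.subX (wt m r i) (Sum.inr q) (Sum.inr p)).mono (wt m r i) ?_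
    simp only [wt_inr]
    by_cases h1 : p.1 = i <;> by_cases h2 : q.1 = i <;> simp [h1, h2]
  have hin : ∀ p : Fin m × Fin r, LBd (wt m r i)
      (∑ q ∈ Finset.univ.filter
          (fun q : Fin m × Fin r => p.1 < q.1 ∨ p.1 = q.1 ∧ p.2 < q.2),
        (if p.1 = i ∧ q.1 = i then 1 else 0))
      (∏ q ∈ Finset.univ.filter
          (fun q : Fin m × Fin r => p.1 < q.1 ∨ p.1 = q.1 ∧ p.2 < q.2),
        (MvPolynomial.X (R := K) (Sum.inr q) - MvPolynomial.X (Sum.inr p))) :=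
    fun p => LBd.prod (wt m r i) _ _ _ (fun q _ => hpq p q)
  have hout := LBd.prod (wt m r i) Finset.univ _ _ (fun p _ => hin p)
  refine hout.mono (wt m r i) (le_of_eq ?_)
  exact (count1 m r i).symm

lemma lb_phat (r n m u : ℕ) (i : Fin m) :
    LBd (wt m r i) (r * u + r ^ 2 * n + r * (r - 1) / 2) (PhatP K r n m u) := by
  classical
  have hM : LBd (wt m r i) (∑ i' : Fin m, ∑ _s : Fin r, (if i' = i then u + r * n else 0))
      (∏ i' : Fin m, ∏ s : Fin r,
        (MvPolynomial.X (R := K) (Sum.inr (i', s)) ^ u *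
          ∏ j : Fin m,
            (MvPolynomial.X (Sum.inr (i', s)) - MvPolynomial.X (Sum.inl j)) ^ (r * n))) :=
    LBd.prod (wt m r i) Finset.univ _ _ (fun i' _ =>
      LBd.prod (wt m r i) Finset.univ _ _ (fun s _ => lb_factor r n m u i i' s))
  have hsum : (∑ i' : Fin m, ∑ _s : Fin r, (if i' = i then u + r * n else 0))
      = r * u + r ^ 2 * n := by
    simp [Finset.sum_ite_eq', Finset.sum_const]
    ring
  rw [hsum] at hM
  have := LBd.mul (wt m r i) hM (lb_pairs r n m u i)
  exact this

lemma hom_phat (r n m u : ℕ) :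
    (PhatP K r n m u).IsHomogeneous
      (m * (r * (u + m * (r * n)))
        + (r * (r * (m * (m - 1) / 2)) + m * (r * (r - 1) / 2))) := by
  classical
  have hF : ∀ (i' : Fin m) (s : Fin r),
      (MvPolynomial.X (R := K) (Sum.inr (i', s)) ^ u *
        ∏ j : Fin m,
          (MvPolynomial.X (Sum.inr (i', s)) - MvPolynomial.X (Sum.inl j)) ^ (r * n)).IsHomogeneous
        (u + m * (r * n)) := by
    intro i' s
    have h1 : (MvPolynomial.X (R := K) (Sum.inr (i', s)) ^ u).IsHomogeneous (1 * u) :=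
      (MvPolynomial.isHomogeneous_X (σ := Fin m ⊕ Fin m × Fin r) K _).pow u
    have h2 : (∏ j : Fin m,
        (MvPolynomial.X (R := K) (Sum.inr (i', s)) - MvPolynomial.X (Sum.inl j)) ^ (r * n)).IsHomogeneous
        (∑ _j : Fin m, 1 * (r * n)) :=
      MvPolynomial.IsHomogeneous.prod _ _ _ (fun j _ =>
        ((MvPolynomial.isHomogeneous_X (σ := Fin m ⊕ Fin m × Fin r) K
            (Sum.inr (i', s))).sub (MvPolynomial.isHomogeneous_X K (Sum.inl j))).pow (r * n))
    have h3 := h1.mul h2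
    have : 1 * u + ∑ _j : Fin m, 1 * (r * n) = u + m * (r * n) := by
      simp [Finset.sum_const]
    rwa [this] at h3
  have hM : (∏ i' : Fin m, ∏ s : Fin r,
      (MvPolynomial.X (R := K) (Sum.inr (i', s)) ^ u *
        ∏ j : Fin m,
          (MvPolynomial.X (Sum.inr (i', s)) - MvPolynomial.X (Sum.inl j)) ^ (r * n))).IsHomogeneous
      (∑ _i' : Fin m, ∑ _s : Fin r, (u + m * (r * n))) :=
    MvPolynomial.IsHomogeneous.prod _ _ _ (fun i' _ =>
      MvPolynomial.IsHomogeneous.prod _ _ _ (fun s _ => hF i' s))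
  have hMsum : (∑ _i' : Fin m, ∑ _s : Fin r, (u + m * (r * n)))
      = m * (r * (u + m * (r * n))) := by
    simp [Finset.sum_const]
  rw [hMsum] at hM
  have hQ : (∏ p : Fin m × Fin r, ∏ q ∈ Finset.univ.filter
      (fun q : Fin m × Fin r => p.1 < q.1 ∨ p.1 = q.1 ∧ p.2 < q.2),
      (MvPolynomial.X (R := K) (Sum.inr q) - MvPolynomial.X (Sum.inr p))).IsHomogeneous
      (∑ p : Fin m × Fin r, ∑ _q ∈ Finset.univ.filter
        (fun q : Fin m × Fin r => p.1 < q.1 ∨ p.1 = q.1 ∧ p.2 < q.2), 1) :=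
    MvPolynomial.IsHomogeneous.prod _ _ _ (fun p _ =>
      MvPolynomial.IsHomogeneous.prod _ _ _ (fun q _ =>
        (MvPolynomial.isHomogeneous_X (σ := Fin m ⊕ Fin m × Fin r) K
          (Sum.inr q)).sub (MvPolynomial.isHomogeneous_X K (Sum.inr p))))
  have hQsum : (∑ p : Fin m × Fin r, ∑ _q ∈ Finset.univ.filter
        (fun q : Fin m × Fin r => p.1 < q.1 ∨ p.1 = q.1 ∧ p.2 < q.2), (1:ℕ))
      = r * (r * (m * (m - 1) / 2)) + m * (r * (r - 1) / 2) := by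
    rw [← count2 m r]
    exact Finset.sum_congr rfl fun p _ => by simp
  rw [hQsum] at hQ
  exact hM.mul hQ

lemma key1 (r n m u : ℕ) (hm : 1 ≤ m) :
    m * (r * (u + 1) + r ^ 2 * n + r * (r - 1) / 2) + m * (m - 1) / 2 * ((2 * n + 1) * r ^ 2)
      = (m * (r * (u + m * (r * n)))
          + (r * (r * (m * (m - 1) / 2)) + m * (r * (r - 1) / 2))) + m * r := by
  obtain ⟨m', rfl⟩ : ∃ m', m = m' + 1 := ⟨m - 1, by omega⟩
  simp only [Nat.add_sub_cancel]
  set A := r * (r - 1) / 2 with hA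
  set B := (m' + 1) * m' / 2 with hB
  have h2B : 2 * B = (m' + 1) * m' := by
    rw [hB, Nat.mul_div_cancel']
    have := Nat.even_mul_succ_self m'
    rw [mul_comm] at this
    exact this.two_dvd
  zify
  zify at h2B
  linear_combination ((n : ℤ) * r ^ 2) * h2B

end Statement11Aux

open Statement11Aux in
/-- `C_{u,m} = Ψ(P̂_u)` is homogeneous in `α₁,…,α_m` of degree
`m[r(u+1) + r²n + r(r−1)/2] + (m(m−1)/2)(2n+1)r²` and is divisible by
`∏_i α_i^{r(u+1)+r²n+r(r−1)/2}`.  The linear map `Ψ`, the composition of the commuting maps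
`ψ̃_{α_i,i,s} : t_{i,s}^k ↦ α_i^{k+1}/∏_{w=0}^s (k+γ_{r−s+w})`, is characterized by its values
on monomials.  Here `γ₁ = ζ_r, …, γ_r = ζ₁`, no `ζ_j` being a non-positive integer. -/
theorem statement11 (K : Type*) [Field K] [CharZero K]
    (r n m : ℕ) (hr : 1 ≤ r) (hn : 1 ≤ n) (hm : 1 ≤ m) (u : ℕ)
    (ζ : ℕ → K) (hζ : ∀ j < r, ¬ ∃ z : ℤ, z ≤ 0 ∧ ζ j = (z : K))
    (γ : ℕ → K) (hγ : ∀ w, 1 ≤ w → w ≤ r → γ w = ζ (r - w))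
    (Ψ : MvPolynomial (Fin m ⊕ Fin m × Fin r) K →ₗ[K] MvPolynomial (Fin m) K)
    (hΨ : ∀ e : (Fin m ⊕ Fin m × Fin r) →₀ ℕ,
      Ψ (MvPolynomial.monomial e 1) =
        (∏ i : Fin m, ∏ s : Fin r,
            (∏ w ∈ Finset.range ((s : ℕ) + 1),
              ((e (Sum.inr (i, s)) : K) + γ (r - (s : ℕ) + w)))⁻¹) •
          MvPolynomial.monomial
            (Finsupp.equivFunOnFinite.symm
              (fun i : Fin m => e (Sum.inl i) + (∑ s : Fin r, e (Sum.inr (i, s))) + r)) 1) :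
    (Ψ (PhatP K r n m u)).IsHomogeneous
        (m * (r * (u + 1) + r ^ 2 * n + r * (r - 1) / 2) +
          m * (m - 1) / 2 * ((2 * n + 1) * r ^ 2)) ∧
    (∏ i : Fin m, MvPolynomial.X i ^ (r * (u + 1) + r ^ 2 * n + r * (r - 1) / 2)) ∣
      Ψ (PhatP K r n m u) := by
  classical
  set P := PhatP K r n m u with hP
  set A := r * (r - 1) / 2 with hA
  set E := r * (u + 1) + r ^ 2 * n + A with hE
  set T := m * E + m * (m - 1) / 2 * ((2 * n + 1) * r ^ 2) with hT
  set f : ((Fin m ⊕ Fin m × Fin r) →₀ ℕ) → (Fin m →₀ ℕ) := fun e =>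
    Finsupp.equivFunOnFinite.symm
      (fun i : Fin m => e (Sum.inl i) + (∑ s : Fin r, e (Sum.inr (i, s))) + r) with hf
  set sc : ((Fin m ⊕ Fin m × Fin r) →₀ ℕ) → K := fun e =>
    ∏ i : Fin m, ∏ s : Fin r,
      (∏ w ∈ Finset.range ((s : ℕ) + 1),
        ((e (Sum.inr (i, s)) : K) + γ (r - (s : ℕ) + w)))⁻¹ with hsc
  have hfapp : ∀ e (i : Fin m),
      f e i = e (Sum.inl i) + (∑ s : Fin r, e (Sum.inr (i, s))) + r := by
    intro e i; simp [hf]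
  have hrepr : Ψ P = ∑ e ∈ P.support,
      (MvPolynomial.coeff e P * sc e) • MvPolynomial.monomial (f e) (1 : K) := by
    conv_lhs => rw [← MvPolynomial.support_sum_monomial_coeff P]
    rw [map_sum]
    refine Finset.sum_congr rfl fun e he => ?_
    have h1 : (MvPolynomial.monomial e) (MvPolynomial.coeff e P)
        = MvPolynomial.coeff e P • (MvPolynomial.monomial e) (1 : K) := by
      rw [MvPolynomial.smul_monomial, smul_eq_mul, mul_one]
    rw [h1, map_smul, hΨ e, smul_smul]
  have hWbd : ∀ e ∈ P.support, ∀ i : Fin m,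
      E ≤ e (Sum.inl i) + (∑ s : Fin r, e (Sum.inr (i, s))) + r := by
    intro e he i
    have h1 := lb_phat (K := K) r n m u i e he
    rw [weight_wt] at h1
    have h2 : E = (r * u + r ^ 2 * n + A) + r := by rw [hE]; ring
    rw [h2]
    exact Nat.add_le_add_right h1 r
  have hDeg : ∀ e ∈ P.support, (∑ v, e v)
      = m * (r * (u + m * (r * n)))
        + (r * (r * (m * (m - 1) / 2)) + m * A) := by
    intro e he
    have h1 := hom_phat (K := K) r n m u (MvPolynomial.mem_support_iff.mp he)
    change (Finsupp.weight (fun _ => 1)) e = _ at h1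
    rw [← Finsupp.degree_eq_weight_one, degree_eq_sum] at h1
    exact h1
  have hfdeg : ∀ e ∈ P.support, (f e).degree = T := by
    intro e he
    rw [degree_eq_sum]
    have h1 : (∑ i : Fin m, f e i)
        = (∑ i : Fin m, e (Sum.inl i))
          + (∑ i : Fin m, ∑ s : Fin r, e (Sum.inr (i, s))) + m * r := by
      rw [Finset.sum_congr rfl fun i _ => hfapp e i]
      rw [Finset.sum_add_distrib, Finset.sum_add_distrib]
      simp [Finset.sum_const, mul_comm]
    have h2 : (∑ i : Fin m, e (Sum.inl i))
          + (∑ i : Fin m, ∑ s : Fin r, e (Sum.inr (i, s)))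
        = ∑ v, e v := by
      rw [Fintype.sum_sum_type, Fintype.sum_prod_type]
    rw [h1, h2, hDeg e he, hT, hE, hA]
    exact (key1 r n m u hm).symm
  constructor
  · rw [hrepr, ← MvPolynomial.mem_homogeneousSubmodule]
    refine Submodule.sum_mem _ fun e he => Submodule.smul_mem _ _ ?_
    rw [MvPolynomial.mem_homogeneousSubmodule]
    exact MvPolynomial.isHomogeneous_monomial _ (hfdeg e he)
  · set d0 : Fin m →₀ ℕ := Finsupp.equivFunOnFinite.symm (fun _ : Fin m => E) with hd0
    have hd0app : ∀ i, d0 i = E := fun i => by simp [hd0]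
    have hEpos : E ≠ 0 := by
      have h0 : 0 < r * (u + 1) := Nat.mul_pos (by omega) (by omega)
      have : 0 < E := by
        rw [hE]
        exact h0.trans_le ((Nat.le_add_right _ _).trans (Nat.le_add_right _ _))
      omega
    have hmon : (∏ i : Fin m, MvPolynomial.X (R := K) i ^ E)
        = MvPolynomial.monomial d0 (1 : K) := by
      have hsupp : d0.support = Finset.univ := by
        ext i; simp [Finsupp.mem_support_iff, hd0app, hEpos]
      rw [← MvPolynomial.prod_X_pow_eq_monomial, hsupp]
      exact Finset.prod_congr rfl fun i _ => by rw [hd0app]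
    refine ⟨∑ e ∈ P.support,
      (MvPolynomial.coeff e P * sc e) • MvPolynomial.monomial (f e - d0) (1 : K), ?_⟩
    rw [hrepr, hmon, Finset.mul_sum]
    refine Finset.sum_congr rfl fun e he => ?_
    have hle : d0 ≤ f e := by
      rw [Finsupp.le_def]
      intro i
      rw [hd0app, hfapp]
      exact hWbd e he i
    have hcancel : d0 + (f e - d0) = f e := add_tsub_cancel_of_le hle
    rw [mul_smul_comm, MvPolynomial.monomial_mul, mul_one, hcancel]
end

section
/- Let K be a field of characteristic 0 containing elements γ₁,…,γ_r none of which is a non-positive rational integer, and let α, β be indeterminates. Consider the polynomial ring R = K[α, 1/α, β][X₀,…,X_{r−1}, Y₀,…,Y_{r−1}]. For sequences ξ_s = (ξ_{s,k})_{k≥1} and ξ'_s = (ξ'_{s,k})_{k≥1} in K (0 ≤ s ≤ r−1) and tuples ℓ = (ℓ₀,…,ℓ_{r−1}), ℓ' = (ℓ'₀,…,ℓ'_{r−1}) of non-negative integers, define Ψ_{α,Ξ_ℓ} = ∘_{s=0}^{r−1} [ψ̃_{α,s} ∘ (θ_{X_s}+ξ_{s,1}) ∘ ⋯ ∘ (θ_{X_s}+ξ_{s,ℓ_s})]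 and Ψ_{β,Ξ'_{ℓ'}} = ∘_{s=0}^{r−1} [ψ̃'_{β,s} ∘ (θ_{Y_s}+ξ'_{s,1}) ∘ ⋯ ∘ (θ_{Y_s}+ξ'_{s,ℓ'_s})], and let Δ be the specialization β ↦ α. Suppose there exist indices i, j such that, as operators on the one-variable polynomial ring K[t], ∘_{w=0}^i (θ_t+γ_{r−i+w})^{−1} ∘ (θ_t+ξ_{i,1}) ∘ ⋯ ∘ (θ_t+ξ_{i,ℓ_i}) = ∘_{w'=0}^j (θ_t+γ_{r−j+w'})^{−1} ∘ (θ_t+ξ'_{j,1}) ∘ ⋯ ∘ (θ_t+ξ'_{j,ℓ'_j}), and let P ∈ K[X,Y] be antisymmetric (every odd permutation of the variables X₀,…,X_{r−1},Y₀,…,Y_{r−1} sends P to −P). Then Δ ∘ Ψ_{α,Ξ_ℓ} ∘ Ψ_{β,Ξ'_{ℓ'}}(P) = 0. Similarly, if there exist 0 ≤ i < j ≤ r−1 with ∘_{w=0}^i (θ_t+γ_{r−i+w})^{−1} ∘ (θ_t+ξ_{i,1}) ∘ ⋯ ∘ (θ_t+ξ_{i,ℓ_i}) = ∘_{w'=0}^j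 (θ_t+γ_{r−j+w'})^{−1} ∘ (θ_t+ξ_{j,1}) ∘ ⋯ ∘ (θ_t+ξ_{j,ℓ_j}), then Ψ_{α,Ξ_ℓ}(P) = 0. -/
private lemma aux_eq_zero_of_eq_neg_self {σ K : Type*} [Field K] [CharZero K]
    (a : MvPolynomial σ K) (h : a = -a) : a = 0 := by
  have h2 : (MvPolynomial.C (2 : K)) * a = 0 := by
    rw [← MvPolynomial.smul_eq_C_mul, two_smul]
    nth_rewrite 1 [h]
    exact neg_add_cancel a
  rcases mul_eq_zero.mp h2 with h3 | h3
  · exact absurd ((MvPolynomial.C_injective σ K) (by simpa using h3) : (2:K) = 0) two_ne_zero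
  · exact h3


/-- vanishing via (anti)symmetry.  The ambient polynomial ring has variables
`α = Sum.inl (Sum.inl ())`, `β = Sum.inl (Sum.inr ())`, `X_s = Sum.inr (Sum.inl s)`,
`Y_s = Sum.inr (Sum.inr s)`.  The maps `Ψ_{α,Ξ_ℓ}` and `Ψ_{β,Ξ'_{ℓ'}}` (compositions of the
commuting operators `ψ̃_{α,s} ∘ (θ_{X_s}+ξ_{s,1}) ∘ ⋯ ∘ (θ_{X_s}+ξ_{s,ℓ_s})`, resp. in the
`Y` variables) are characterized by their values on monomials; `Δ` is the specialization
`β ↦ α`.  Equality of the diagonal operators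
`∘_{w=0}^i (θ+γ_{r−i+w})⁻¹ ∘ (θ+ξ_{i,1}) ∘ ⋯ ∘ (θ+ξ_{i,ℓ_i})` on `K[t]` is expressed by the
equality of their eigenvalues on every monomial `t^k`.  `P ∈ K[X,Y]` is antisymmetric. -/
theorem statement14 (K : Type*) [Field K] [CharZero K]
    (r : ℕ) (hr : 1 ≤ r)
    (γ : ℕ → K) (hγ : ∀ w, 1 ≤ w → w ≤ r → ¬ ∃ z : ℤ, z ≤ 0 ∧ γ w = (z : K))
    (ξ ξ' : Fin r → ℕ → K) (ℓv ℓv' : Fin r → ℕ)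
    (ΨA ΨB : MvPolynomial ((Unit ⊕ Unit) ⊕ (Fin r ⊕ Fin r)) K →ₗ[K]
      MvPolynomial ((Unit ⊕ Unit) ⊕ (Fin r ⊕ Fin r)) K)
    (hΨA : ∀ e : ((Unit ⊕ Unit) ⊕ (Fin r ⊕ Fin r)) →₀ ℕ,
      ΨA (MvPolynomial.monomial e 1) =
        (∏ s : Fin r,
          (∏ w ∈ Finset.range (ℓv s), ((e (Sum.inr (Sum.inl s)) : K) + ξ s (w + 1))) *
            (∏ w ∈ Finset.range ((s : ℕ) + 1),
              ((e (Sum.inr (Sum.inl s)) : K) + γ (r - (s : ℕ) + w)))⁻¹) •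
        MvPolynomial.monomial
          (Finsupp.equivFunOnFinite.symm fun v =>
            match v with
            | Sum.inl (Sum.inl _) =>
                e (Sum.inl (Sum.inl ())) + ∑ s : Fin r, e (Sum.inr (Sum.inl s))
            | Sum.inl (Sum.inr _) => e (Sum.inl (Sum.inr ()))
            | Sum.inr (Sum.inl _) => 0
            | Sum.inr (Sum.inr s) => e (Sum.inr (Sum.inr s))) 1)
    (hΨB : ∀ e : ((Unit ⊕ Unit) ⊕ (Fin r ⊕ Fin r)) →₀ ℕ,
      ΨB (MvPolynomial.monomial e 1) =
        (∏ s : Fin r,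
          (∏ w ∈ Finset.range (ℓv' s), ((e (Sum.inr (Sum.inr s)) : K) + ξ' s (w + 1))) *
            (∏ w ∈ Finset.range ((s : ℕ) + 1),
              ((e (Sum.inr (Sum.inr s)) : K) + γ (r - (s : ℕ) + w)))⁻¹) •
        MvPolynomial.monomial
          (Finsupp.equivFunOnFinite.symm fun v =>
            match v with
            | Sum.inl (Sum.inl _) => e (Sum.inl (Sum.inl ()))
            | Sum.inl (Sum.inr _) =>
                e (Sum.inl (Sum.inr ())) + ∑ s : Fin r, e (Sum.inr (Sum.inr s))
            | Sum.inr (Sum.inl s) => e (Sum.inr (Sum.inl s))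
            | Sum.inr (Sum.inr _) => 0) 1)
    (P : MvPolynomial (Fin r ⊕ Fin r) K)
    (hP : ∀ τ : Equiv.Perm (Fin r ⊕ Fin r), Equiv.Perm.sign τ = -1 →
      MvPolynomial.rename (τ : (Fin r ⊕ Fin r) → (Fin r ⊕ Fin r)) P = -P) :
    ((∃ i j : Fin r, ∀ k : ℕ,
        (∏ w ∈ Finset.range (ℓv i), ((k : K) + ξ i (w + 1))) /
            (∏ w ∈ Finset.range ((i : ℕ) + 1), ((k : K) + γ (r - (i : ℕ) + w))) =
          (∏ w ∈ Finset.range (ℓv' j), ((k : K) + ξ' j (w + 1))) /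
            (∏ w ∈ Finset.range ((j : ℕ) + 1), ((k : K) + γ (r - (j : ℕ) + w)))) →
      MvPolynomial.aeval
        (fun v : (Unit ⊕ Unit) ⊕ (Fin r ⊕ Fin r) =>
          match v with
          | Sum.inl _ => (MvPolynomial.X (Sum.inl (Sum.inl ())) :
              MvPolynomial ((Unit ⊕ Unit) ⊕ (Fin r ⊕ Fin r)) K)
          | Sum.inr w => MvPolynomial.X (Sum.inr w))
        (ΨA (ΨB (MvPolynomial.rename (Sum.inr : (Fin r ⊕ Fin r) → _) P))) = 0) ∧
    ((∃ i j : Fin r, i < j ∧ ∀ k : ℕ,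
        (∏ w ∈ Finset.range (ℓv i), ((k : K) + ξ i (w + 1))) /
            (∏ w ∈ Finset.range ((i : ℕ) + 1), ((k : K) + γ (r - (i : ℕ) + w))) =
          (∏ w ∈ Finset.range (ℓv j), ((k : K) + ξ j (w + 1))) /
            (∏ w ∈ Finset.range ((j : ℕ) + 1), ((k : K) + γ (r - (j : ℕ) + w)))) →
      ΨA (MvPolynomial.rename (Sum.inr : (Fin r ⊕ Fin r) → _) P) = 0) := by
  classical
  constructor
  · rintro ⟨i, j, hc⟩
    set σb : Equiv.Perm ((Unit ⊕ Unit) ⊕ (Fin r ⊕ Fin r)) :=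
      Equiv.swap (Sum.inr (Sum.inl i)) (Sum.inr (Sum.inr j)) with hσb
    have hcc : ∀ k : ℕ,
        (∏ w ∈ Finset.range (ℓv i), ((k : K) + ξ i (w + 1))) *
          (∏ w ∈ Finset.range ((i : ℕ) + 1), ((k : K) + γ (r - (i : ℕ) + w)))⁻¹ =
        (∏ w ∈ Finset.range (ℓv' j), ((k : K) + ξ' j (w + 1))) *
          (∏ w ∈ Finset.range ((j : ℕ) + 1), ((k : K) + γ (r - (j : ℕ) + w)))⁻¹ := by
      intro k
      have := hc k
      rwa [div_eq_mul_inv, div_eq_mul_inv] at this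
    have hev : ∀ (e : ((Unit ⊕ Unit) ⊕ (Fin r ⊕ Fin r)) →₀ ℕ) v,
        Finsupp.mapDomain (⇑σb) e v = e (σb v) := by
      intro e v
      rw [Finsupp.mapDomain_equiv_apply]
      simp [hσb, Equiv.symm_swap]
    have hinr : ∀ v : Fin r ⊕ Fin r,
        σb (Sum.inr v) = Sum.inr (Equiv.swap (Sum.inl i : Fin r ⊕ Fin r) (Sum.inr j) v) := by
      intro v
      rw [hσb]
      exact Sum.inr_injective.swap_apply (Sum.inl i) (Sum.inr j) v
    have hαfix : σb (Sum.inl (Sum.inl ())) = Sum.inl (Sum.inl ()) := by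
      rw [hσb]; exact Equiv.swap_apply_of_ne_of_ne (by simp) (by simp)
    have hβfix : σb (Sum.inl (Sum.inr ())) = Sum.inl (Sum.inr ()) := by
      rw [hσb]; exact Equiv.swap_apply_of_ne_of_ne (by simp) (by simp)
    have hXfix : ∀ s : Fin r, s ≠ i → σb (Sum.inr (Sum.inl s)) = Sum.inr (Sum.inl s) := by
      intro s hs
      rw [hσb]; exact Equiv.swap_apply_of_ne_of_ne (by simp [hs]) (by simp)
    have hYfix : ∀ s : Fin r, s ≠ j → σb (Sum.inr (Sum.inr s)) = Sum.inr (Sum.inr s) := by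
      intro s hs
      rw [hσb]; exact Equiv.swap_apply_of_ne_of_ne (by simp) (by simp [hs])
    have hXi : σb (Sum.inr (Sum.inl i)) = Sum.inr (Sum.inr j) := by
      rw [hσb]; exact Equiv.swap_apply_left _ _
    have hYj : σb (Sum.inr (Sum.inr j)) = Sum.inr (Sum.inl i) := by
      rw [hσb]; exact Equiv.swap_apply_right _ _
    -- closed form for the composite map on monomials
    have hLmono : ∀ e : ((Unit ⊕ Unit) ⊕ (Fin r ⊕ Fin r)) →₀ ℕ,
        MvPolynomial.aeval
          (fun v : (Unit ⊕ Unit) ⊕ (Fin r ⊕ Fin r) =>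
            match v with
            | Sum.inl _ => (MvPolynomial.X (Sum.inl (Sum.inl ())) :
                MvPolynomial ((Unit ⊕ Unit) ⊕ (Fin r ⊕ Fin r)) K)
            | Sum.inr w => MvPolynomial.X (Sum.inr w))
          (ΨA (ΨB (MvPolynomial.monomial e 1))) =
        ((∏ s : Fin r,
            (∏ w ∈ Finset.range (ℓv' s), ((e (Sum.inr (Sum.inr s)) : K) + ξ' s (w + 1))) *
              (∏ w ∈ Finset.range ((s : ℕ) + 1),
                ((e (Sum.inr (Sum.inr s)) : K) + γ (r - (s : ℕ) + w)))⁻¹) *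
          (∏ s : Fin r,
            (∏ w ∈ Finset.range (ℓv s), ((e (Sum.inr (Sum.inl s)) : K) + ξ s (w + 1))) *
              (∏ w ∈ Finset.range ((s : ℕ) + 1),
                ((e (Sum.inr (Sum.inl s)) : K) + γ (r - (s : ℕ) + w)))⁻¹)) •
        ((MvPolynomial.X (Sum.inl (Sum.inl ())) :
            MvPolynomial ((Unit ⊕ Unit) ⊕ (Fin r ⊕ Fin r)) K) ^
          ((e (Sum.inl (Sum.inl ())) + ∑ s : Fin r, e (Sum.inr (Sum.inl s))) +
            (e (Sum.inl (Sum.inr ())) + ∑ s : Fin r, e (Sum.inr (Sum.inr s))))) := by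
      intro e
      rw [hΨB e]
      simp only [map_smul]
      rw [hΨA]
      simp only [map_smul, Finsupp.coe_equivFunOnFinite_symm, smul_smul]
      rw [MvPolynomial.aeval_monomial, map_one, one_mul,
        Finsupp.prod_fintype _ _ (fun v => pow_zero _), Fintype.prod_sum_type]
      simp only [Finsupp.coe_equivFunOnFinite_symm]
      congr 1
      simp only [Fintype.prod_sum_type, Finset.prod_const, Finset.card_univ]
      simp [pow_add]
    -- scalar exchange lemma
    have hscal : ∀ u₁ u₂ v₁ v₂ : Fin r → ℕ,
        (∀ s, s ≠ j → u₁ s = u₂ s) → (∀ s, s ≠ i → v₁ s = v₂ s) →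
        u₁ j = v₂ i → v₁ i = u₂ j →
        (∏ s : Fin r,
            (∏ w ∈ Finset.range (ℓv' s), ((u₁ s : K) + ξ' s (w + 1))) *
              (∏ w ∈ Finset.range ((s : ℕ) + 1), ((u₁ s : K) + γ (r - (s : ℕ) + w)))⁻¹) *
          (∏ s : Fin r,
            (∏ w ∈ Finset.range (ℓv s), ((v₁ s : K) + ξ s (w + 1))) *
              (∏ w ∈ Finset.range ((s : ℕ) + 1), ((v₁ s : K) + γ (r - (s : ℕ) + w)))⁻¹) =
        (∏ s : Fin r,
            (∏ w ∈ Finset.range (ℓv' s), ((u₂ s : K) + ξ' s (w + 1))) *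
              (∏ w ∈ Finset.range ((s : ℕ) + 1), ((u₂ s : K) + γ (r - (s : ℕ) + w)))⁻¹) *
          (∏ s : Fin r,
            (∏ w ∈ Finset.range (ℓv s), ((v₂ s : K) + ξ s (w + 1))) *
              (∏ w ∈ Finset.range ((s : ℕ) + 1), ((v₂ s : K) + γ (r - (s : ℕ) + w)))⁻¹) := by
      intro u₁ u₂ v₁ v₂ hu hv huj hvi
      rw [← Finset.mul_prod_erase Finset.univ _ (Finset.mem_univ j),
        ← Finset.mul_prod_erase Finset.univ _ (Finset.mem_univ i),
        ← Finset.mul_prod_erase Finset.univ _ (Finset.mem_univ j),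
        ← Finset.mul_prod_erase Finset.univ _ (Finset.mem_univ i)]
      have h1 : (∏ s ∈ Finset.univ.erase j,
          (∏ w ∈ Finset.range (ℓv' s), ((u₁ s : K) + ξ' s (w + 1))) *
            (∏ w ∈ Finset.range ((s : ℕ) + 1), ((u₁ s : K) + γ (r - (s : ℕ) + w)))⁻¹) =
          ∏ s ∈ Finset.univ.erase j,
          (∏ w ∈ Finset.range (ℓv' s), ((u₂ s : K) + ξ' s (w + 1))) *
            (∏ w ∈ Finset.range ((s : ℕ) + 1), ((u₂ s : K) + γ (r - (s : ℕ) + w)))⁻¹ :=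
        Finset.prod_congr rfl fun s hs => by rw [hu s (Finset.ne_of_mem_erase hs)]
      have h2 : (∏ s ∈ Finset.univ.erase i,
          (∏ w ∈ Finset.range (ℓv s), ((v₁ s : K) + ξ s (w + 1))) *
            (∏ w ∈ Finset.range ((s : ℕ) + 1), ((v₁ s : K) + γ (r - (s : ℕ) + w)))⁻¹) =
          ∏ s ∈ Finset.univ.erase i,
          (∏ w ∈ Finset.range (ℓv s), ((v₂ s : K) + ξ s (w + 1))) *
            (∏ w ∈ Finset.range ((s : ℕ) + 1), ((v₂ s : K) + γ (r - (s : ℕ) + w)))⁻¹ :=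
        Finset.prod_congr rfl fun s hs => by rw [hv s (Finset.ne_of_mem_erase hs)]
      rw [h1, h2, huj, hvi, hcc (u₂ j), ← hcc (v₂ i)]
      ring
    -- invariance on monomials
    have key : ∀ e : ((Unit ⊕ Unit) ⊕ (Fin r ⊕ Fin r)) →₀ ℕ,
        MvPolynomial.aeval
          (fun v : (Unit ⊕ Unit) ⊕ (Fin r ⊕ Fin r) =>
            match v with
            | Sum.inl _ => (MvPolynomial.X (Sum.inl (Sum.inl ())) :
                MvPolynomial ((Unit ⊕ Unit) ⊕ (Fin r ⊕ Fin r)) K)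
            | Sum.inr w => MvPolynomial.X (Sum.inr w))
          (ΨA (ΨB (MvPolynomial.monomial (Finsupp.mapDomain (⇑σb) e) 1))) =
        MvPolynomial.aeval
          (fun v : (Unit ⊕ Unit) ⊕ (Fin r ⊕ Fin r) =>
            match v with
            | Sum.inl _ => (MvPolynomial.X (Sum.inl (Sum.inl ())) :
                MvPolynomial ((Unit ⊕ Unit) ⊕ (Fin r ⊕ Fin r)) K)
            | Sum.inr w => MvPolynomial.X (Sum.inr w))
          (ΨA (ΨB (MvPolynomial.monomial e 1))) := by
      intro e
      rw [hLmono, hLmono]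
      have hexp : ((Finsupp.mapDomain (⇑σb) e) (Sum.inl (Sum.inl ())) +
            ∑ s : Fin r, (Finsupp.mapDomain (⇑σb) e) (Sum.inr (Sum.inl s))) +
          ((Finsupp.mapDomain (⇑σb) e) (Sum.inl (Sum.inr ())) +
            ∑ s : Fin r, (Finsupp.mapDomain (⇑σb) e) (Sum.inr (Sum.inr s))) =
          (e (Sum.inl (Sum.inl ())) + ∑ s : Fin r, e (Sum.inr (Sum.inl s))) +
          (e (Sum.inl (Sum.inr ())) + ∑ s : Fin r, e (Sum.inr (Sum.inr s))) := by
        have h1 : (Finsupp.mapDomain (⇑σb) e) (Sum.inl (Sum.inl ())) = e (Sum.inl (Sum.inl ())) := by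
          rw [hev, hαfix]
        have h2 : (Finsupp.mapDomain (⇑σb) e) (Sum.inl (Sum.inr ())) = e (Sum.inl (Sum.inr ())) := by
          rw [hev, hβfix]
        have l : ∀ d : ((Unit ⊕ Unit) ⊕ (Fin r ⊕ Fin r)) →₀ ℕ,
            ((∑ s : Fin r, d (Sum.inr (Sum.inl s))) + ∑ s : Fin r, d (Sum.inr (Sum.inr s))) =
              ∑ v : Fin r ⊕ Fin r, d (Sum.inr v) :=
          fun d => (Fintype.sum_sum_type (fun v : Fin r ⊕ Fin r => d (Sum.inr v))).symm
        have hsum : ((∑ s : Fin r, (Finsupp.mapDomain (⇑σb) e) (Sum.inr (Sum.inl s))) +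
            ∑ s : Fin r, (Finsupp.mapDomain (⇑σb) e) (Sum.inr (Sum.inr s))) =
            ((∑ s : Fin r, e (Sum.inr (Sum.inl s))) + ∑ s : Fin r, e (Sum.inr (Sum.inr s))) := by
          rw [l, l]
          refine Fintype.sum_equiv (Equiv.swap (Sum.inl i : Fin r ⊕ Fin r) (Sum.inr j)) _ _
            fun v => ?_
          rw [hev, hinr]
        omega
      rw [hexp]
      congr 1
      exact hscal _ _ _ _
        (fun s hs => by rw [hev, hYfix s hs])
        (fun s hs => by rw [hev, hXfix s hs])
        (by rw [hev, hYj])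
        (by rw [hev, hXi])
    -- invariance for all polynomials
    have keyQ : ∀ Q : MvPolynomial ((Unit ⊕ Unit) ⊕ (Fin r ⊕ Fin r)) K,
        MvPolynomial.aeval
          (fun v : (Unit ⊕ Unit) ⊕ (Fin r ⊕ Fin r) =>
            match v with
            | Sum.inl _ => (MvPolynomial.X (Sum.inl (Sum.inl ())) :
                MvPolynomial ((Unit ⊕ Unit) ⊕ (Fin r ⊕ Fin r)) K)
            | Sum.inr w => MvPolynomial.X (Sum.inr w))
          (ΨA (ΨB (MvPolynomial.rename (⇑σb) Q))) =
        MvPolynomial.aeval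
          (fun v : (Unit ⊕ Unit) ⊕ (Fin r ⊕ Fin r) =>
            match v with
            | Sum.inl _ => (MvPolynomial.X (Sum.inl (Sum.inl ())) :
                MvPolynomial ((Unit ⊕ Unit) ⊕ (Fin r ⊕ Fin r)) K)
            | Sum.inr w => MvPolynomial.X (Sum.inr w))
          (ΨA (ΨB Q)) := by
      intro Q
      rw [Q.as_sum]
      simp only [map_sum]
      refine Finset.sum_congr rfl fun e _ => ?_
      have hmon : (MvPolynomial.monomial e (MvPolynomial.coeff e Q)) =
          MvPolynomial.coeff e Q • MvPolynomial.monomial e (1 : K) := by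
        rw [MvPolynomial.smul_monomial, smul_eq_mul, mul_one]
      rw [hmon]
      simp only [map_smul]
      rw [MvPolynomial.rename_monomial, key e]
    have hcompose : (⇑σb) ∘ (Sum.inr : Fin r ⊕ Fin r → (Unit ⊕ Unit) ⊕ (Fin r ⊕ Fin r))
        = Sum.inr ∘ ⇑(Equiv.swap (Sum.inl i : Fin r ⊕ Fin r) (Sum.inr j)) := by
      funext v
      simp only [Function.comp_apply, hσb]
      exact Sum.inr_injective.swap_apply (Sum.inl i) (Sum.inr j) v
    have hτ : MvPolynomial.rename (⇑σb) (MvPolynomial.rename (Sum.inr : Fin r ⊕ Fin r → _) P)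
        = - MvPolynomial.rename (Sum.inr : Fin r ⊕ Fin r → _) P := by
      rw [MvPolynomial.rename_rename, hcompose, ← MvPolynomial.rename_rename,
        hP _ (Equiv.Perm.sign_swap (by simp)), map_neg]
    have hfinal := keyQ (MvPolynomial.rename (Sum.inr : Fin r ⊕ Fin r → _) P)
    rw [hτ, map_neg, map_neg, map_neg] at hfinal
    exact aux_eq_zero_of_eq_neg_self _ hfinal.symm
  · rintro ⟨i, j, hij, hc⟩
    have hijne : i ≠ j := ne_of_lt hij
    set σb : Equiv.Perm ((Unit ⊕ Unit) ⊕ (Fin r ⊕ Fin r)) :=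
      Equiv.swap (Sum.inr (Sum.inl i)) (Sum.inr (Sum.inl j)) with hσb
    have hcc : ∀ k : ℕ,
        (∏ w ∈ Finset.range (ℓv i), ((k : K) + ξ i (w + 1))) *
          (∏ w ∈ Finset.range ((i : ℕ) + 1), ((k : K) + γ (r - (i : ℕ) + w)))⁻¹ =
        (∏ w ∈ Finset.range (ℓv j), ((k : K) + ξ j (w + 1))) *
          (∏ w ∈ Finset.range ((j : ℕ) + 1), ((k : K) + γ (r - (j : ℕ) + w)))⁻¹ := by
      intro k
      have := hc k
      rwa [div_eq_mul_inv, div_eq_mul_inv] at this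
    have hev : ∀ (e : ((Unit ⊕ Unit) ⊕ (Fin r ⊕ Fin r)) →₀ ℕ) v,
        Finsupp.mapDomain (⇑σb) e v = e (σb v) := by
      intro e v
      rw [Finsupp.mapDomain_equiv_apply]
      simp [hσb, Equiv.symm_swap]
    have hXs : ∀ s : Fin r,
        σb (Sum.inr (Sum.inl s)) = Sum.inr (Sum.inl (Equiv.swap i j s)) := by
      intro s
      rw [hσb]
      exact (Sum.inr_injective.comp Sum.inl_injective).swap_apply i j s
    have hαfix : σb (Sum.inl (Sum.inl ())) = Sum.inl (Sum.inl ()) := by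
      rw [hσb]; exact Equiv.swap_apply_of_ne_of_ne (by simp) (by simp)
    have hβfix : σb (Sum.inl (Sum.inr ())) = Sum.inl (Sum.inr ()) := by
      rw [hσb]; exact Equiv.swap_apply_of_ne_of_ne (by simp) (by simp)
    have hYfix : ∀ s : Fin r, σb (Sum.inr (Sum.inr s)) = Sum.inr (Sum.inr s) := by
      intro s
      rw [hσb]; exact Equiv.swap_apply_of_ne_of_ne (by simp) (by simp)
    have key : ∀ e : ((Unit ⊕ Unit) ⊕ (Fin r ⊕ Fin r)) →₀ ℕ,
        ΨA (MvPolynomial.monomial (Finsupp.mapDomain (⇑σb) e) 1) =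
          ΨA (MvPolynomial.monomial e 1) := by
      intro e
      rw [hΨA, hΨA]
      congr 1
      · refine Fintype.prod_equiv (Equiv.swap i j) _ _ fun s => ?_
        rw [hev, hXs s]
        rcases eq_or_ne s i with rfl | hsi
        · rw [Equiv.swap_apply_left]
          exact hcc _
        rcases eq_or_ne s j with rfl | hsj
        · rw [Equiv.swap_apply_right]
          exact (hcc _).symm
        · rw [Equiv.swap_apply_of_ne_of_ne hsi hsj]
      · refine congrArg (fun f => MvPolynomial.monomial
          ((Finsupp.equivFunOnFinite.symm : _ → ((Unit ⊕ Unit) ⊕ (Fin r ⊕ Fin r)) →₀ ℕ) f) (1:K))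
          (funext fun v => ?_)
        rcases v with (⟨⟩|⟨⟩)|(s|s)
        · dsimp only
          rw [hev, hαfix]
          congr 1
          exact Fintype.sum_equiv (Equiv.swap i j) _ _ fun s => by rw [hev, hXs s]
        · dsimp only
          rw [hev, hβfix]
        · rfl
        · dsimp only
          rw [hev, hYfix s]
    have keyQ : ∀ Q : MvPolynomial ((Unit ⊕ Unit) ⊕ (Fin r ⊕ Fin r)) K,
        ΨA (MvPolynomial.rename (⇑σb) Q) = ΨA Q := by
      intro Q
      rw [Q.as_sum]
      simp only [map_sum]
      refine Finset.sum_congr rfl fun e _ => ?_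
      have hmon : (MvPolynomial.monomial e (MvPolynomial.coeff e Q)) =
          MvPolynomial.coeff e Q • MvPolynomial.monomial e (1 : K) := by
        rw [MvPolynomial.smul_monomial, smul_eq_mul, mul_one]
      rw [hmon]
      simp only [map_smul]
      rw [MvPolynomial.rename_monomial, key e]
    have hcompose : (⇑σb) ∘ (Sum.inr : Fin r ⊕ Fin r → (Unit ⊕ Unit) ⊕ (Fin r ⊕ Fin r))
        = Sum.inr ∘ ⇑(Equiv.swap (Sum.inl i : Fin r ⊕ Fin r) (Sum.inl j)) := by
      funext v
      simp only [Function.comp_apply, hσb]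
      exact Sum.inr_injective.swap_apply (Sum.inl i) (Sum.inl j) v
    have hτ : MvPolynomial.rename (⇑σb) (MvPolynomial.rename (Sum.inr : Fin r ⊕ Fin r → _) P)
        = - MvPolynomial.rename (Sum.inr : Fin r ⊕ Fin r → _) P := by
      rw [MvPolynomial.rename_rename, hcompose, ← MvPolynomial.rename_rename,
        hP _ (Equiv.Perm.sign_swap (by simp [hijne])), map_neg]
    have hfinal := keyQ (MvPolynomial.rename (Sum.inr : Fin r ⊕ Fin r → _) P)
    rw [hτ, map_neg] at hfinal
    exact aux_eq_zero_of_eq_neg_self _ hfinal.symm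
end
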